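/- For even m ≥ 4 and n divisible by m/2, with n' = 2n/m, a bit string x ∈ {0,1}^n is Pareto-optimal for the m-objective LOTZ function if and only if for every k ∈ [1, m/2] there exists i ∈ [0, n'] such that the k-th block x_{(k-1)n'+1}, ..., x_{kn'} equals 1^i 0^{n'-i}. -/

import Mathlib

/-- Bit of `x` at (0-indexed) position `i`, `false` if out of range. -/
def bitAt (n : ℕ) (x : Fin n → Bool) (i : ℕ) : Bool :=
  if h : i < n then x ⟨i, h⟩ else false

/-- Number of leading ones of the substring of `x` of length `len` starting at `start`. -/
def leadOnes (n : ℕ) (x : Fin n → Bool) (start len : ℕ) : ℕ :=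
  ((Finset.range len).filter (fun i => ∀ j ≤ i, bitAt n x (start + j) = true)).card

/-- Number of trailing zeros of the substring of `x` of length `len` starting at `start`. -/
def trailZeros (n : ℕ) (x : Fin n → Bool) (start len : ℕ) : ℕ :=
  ((Finset.range len).filter
    (fun i => ∀ j, i ≤ j → j < len → bitAt n x (start + j) = false)).card

/-- The `m`-objective LOTZ function on bit strings of length `n` (objectives `0`-indexed):
even `k` counts the leading ones of block `k/2`, odd `k` the trailing zeros of that block,
where blocks are consecutive substrings of length `n' = 2n/m`. -/
def mLOTZ (m n : ℕ) (x : Fin n → Bool) (k : Fin m) : ℕ :=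
  if k.val % 2 = 0 then leadOnes n x ((k.val / 2) * (2 * n / m)) (2 * n / m)
  else trailZeros n x ((k.val / 2) * (2 * n / m)) (2 * n / m)

/-- `u` strictly dominates `v`. -/
def StrictDom {m : ℕ} (u v : Fin m → ℕ) : Prop :=
  (∀ i, v i ≤ u i) ∧ ∃ i, v i < u i

/-- `x` is Pareto-optimal for `mLOTZ m n`. -/
def ParetoOpt (m n : ℕ) (x : Fin n → Bool) : Prop :=
  ∀ y : Fin n → Bool, ¬ StrictDom (mLOTZ m n y) (mLOTZ m n x)

lemma down_eq_range (S : Finset ℕ) (h : ∀ a ∈ S, ∀ b, b ≤ a → b ∈ S) :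
    S = Finset.range S.card := by
  ext a
  simp only [Finset.mem_range]
  constructor
  · intro ha
    have hsub : Finset.range (a + 1) ⊆ S := fun b hb =>
      h a ha b (Nat.lt_succ_iff.mp (Finset.mem_range.mp hb))
    have := Finset.card_le_card hsub
    simp only [Finset.card_range] at this
    omega
  · intro ha
    by_contra hne
    have hsub : S ⊆ Finset.range a := by
      intro b hb
      simp only [Finset.mem_range]
      by_contra hba
      exact hne (h b hb a (le_of_not_gt hba))
    have := Finset.card_le_card hsub
    simp only [Finset.card_range] at this
    omega

lemma leadSet_eq_range (n : ℕ) (x : Fin n → Bool) (s l : ℕ) :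
    (Finset.range l).filter (fun i => ∀ j ≤ i, bitAt n x (s + j) = true)
      = Finset.range (leadOnes n x s l) := by
  apply down_eq_range
  intro a ha b hb
  simp only [Finset.mem_filter, Finset.mem_range] at ha ⊢
  exact ⟨lt_of_le_of_lt hb ha.1, fun j hj => ha.2 j (hj.trans hb)⟩

lemma mem_lead (n : ℕ) (x : Fin n → Bool) (s l a : ℕ) :
    a < leadOnes n x s l ↔ (a < l ∧ ∀ j ≤ a, bitAt n x (s + j) = true) := by
  have := leadSet_eq_range n x s l
  have h := Finset.ext_iff.mp this a
  simp only [Finset.mem_filter, Finset.mem_range] at h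
  exact h.symm

lemma mem_trail (n : ℕ) (x : Fin n → Bool) (s l a : ℕ) :
    (a < l ∧ l - trailZeros n x s l ≤ a) ↔
      (a < l ∧ ∀ j, a ≤ j → j < l → bitAt n x (s + j) = false) := by
  set S : Finset ℕ := (Finset.range l).filter
    (fun i => ∀ j, i ≤ j → j < l → bitAt n x (s + j) = false) with hS
  have hsub : S ⊆ Finset.range l := Finset.filter_subset _ _
  have hD : Finset.range l \ S = Finset.range (l - trailZeros n x s l) := by
    have hdc : ∀ a ∈ Finset.range l \ S, ∀ b, b ≤ a → b ∈ Finset.range l \ S := by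
      intro a ha b hb
      simp only [Finset.mem_sdiff, Finset.mem_range, hS, Finset.mem_filter] at ha ⊢
      refine ⟨lt_of_le_of_lt hb ha.1, ?_⟩
      intro hcon
      exact ha.2 ⟨ha.1, fun j hj hjl => hcon.2 j (hb.trans hj) hjl⟩
    have := down_eq_range _ hdc
    rwa [Finset.card_sdiff_of_subset hsub, Finset.card_range] at this
  have h := Finset.ext_iff.mp hD a
  simp only [Finset.mem_sdiff, Finset.mem_range, hS, Finset.mem_filter] at h
  constructor
  · rintro ⟨hal, hT⟩
    refine ⟨hal, ?_⟩
    by_contra hP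
    have : a < l - trailZeros n x s l := h.mp ⟨hal, fun hc => hP hc.2⟩
    omega
  · rintro ⟨hal, hP⟩
    refine ⟨hal, ?_⟩
    by_contra hlt
    exact (h.mpr (by omega)).2 ⟨hal, hP⟩

lemma lead_le (n : ℕ) (x : Fin n → Bool) (s l : ℕ) : leadOnes n x s l ≤ l := by
  have := Finset.card_filter_le (Finset.range l)
    (fun i => ∀ j ≤ i, bitAt n x (s + j) = true)
  simpa [leadOnes] using this

lemma trail_le (n : ℕ) (x : Fin n → Bool) (s l : ℕ) : trailZeros n x s l ≤ l := by
  have := Finset.card_filter_le (Finset.range l)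
    (fun i => ∀ j, i ≤ j → j < l → bitAt n x (s + j) = false)
  simpa [trailZeros] using this

lemma sum_le (n : ℕ) (x : Fin n → Bool) (s l : ℕ) :
    leadOnes n x s l + trailZeros n x s l ≤ l := by
  by_cases hL : leadOnes n x s l = 0
  · have := trail_le n x s l; omega
  by_cases hT : trailZeros n x s l = 0
  · have := lead_le n x s l; omega
  by_contra hgt
  push_neg at hgt
  have hTl := trail_le n x s l
  set a := l - trailZeros n x s l with ha
  have haL : a < leadOnes n x s l := by omega
  have hal : a < l := by omega
  have h1 := (mem_lead n x s l a).mp haL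
  have h2 := (mem_trail n x s l a).mp ⟨hal, le_refl _⟩
  have hb1 := h1.2 a (le_refl a)
  have hb2 := h2.2 a (le_refl a) hal
  rw [hb1] at hb2
  simp at hb2

lemma of_form (n : ℕ) (x : Fin n → Bool) (s l i : ℕ) (hi : i ≤ l)
    (hf : ∀ j < l, (bitAt n x (s + j) = true ↔ j < i)) :
    leadOnes n x s l = i ∧ trailZeros n x s l = l - i := by
  constructor
  · have : (Finset.range l).filter (fun a => ∀ j ≤ a, bitAt n x (s + j) = true)
        = Finset.range i := by
      ext a
      simp only [Finset.mem_filter, Finset.mem_range]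
      constructor
      · rintro ⟨hal, hall⟩
        exact (hf a hal).mp (hall a (le_refl a))
      · intro hai
        refine ⟨lt_of_lt_of_le hai hi, fun j hj => ?_⟩
        exact (hf j (lt_of_le_of_lt hj (lt_of_lt_of_le hai hi))).mpr (lt_of_le_of_lt hj hai)
    rw [leadOnes, this, Finset.card_range]
  · have : (Finset.range l).filter
        (fun a => ∀ j, a ≤ j → j < l → bitAt n x (s + j) = false)
        = Finset.range l \ Finset.range i := by
      ext a
      simp only [Finset.mem_filter, Finset.mem_sdiff, Finset.mem_range]
      constructor
      · rintro ⟨hal, hP⟩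
        refine ⟨hal, fun hai => ?_⟩
        have := hP a (le_refl a) hal
        rw [(hf a hal).mpr hai] at this
        simp at this
      · rintro ⟨hal, hia⟩
        refine ⟨hal, fun j hj hjl => ?_⟩
        have : ¬ (j < i) := by omega
        simpa [this] using (hf j hjl)
    rw [trailZeros, this, Finset.card_sdiff_of_subset (by
      intro a ha; simp only [Finset.mem_range] at ha ⊢; omega),
      Finset.card_range, Finset.card_range]

lemma form_of_sum (n : ℕ) (x : Fin n → Bool) (s l : ℕ)
    (h : leadOnes n x s l + trailZeros n x s l = l) :
    ∀ j < l, (bitAt n x (s + j) = true ↔ j < leadOnes n x s l) := by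
  intro j hjl
  constructor
  · intro hb
    by_contra hjL
    push_neg at hjL
    have : l - trailZeros n x s l ≤ j := by omega
    have := ((mem_trail n x s l j).mp ⟨hjl, this⟩).2 j (le_refl j) hjl
    rw [hb] at this
    simp at this
  · intro hjL
    exact ((mem_lead n x s l j).mp hjL).2 j (le_refl j)

lemma lead_congr (n : ℕ) (x y : Fin n → Bool) (s l : ℕ)
    (h : ∀ j < l, bitAt n y (s + j) = bitAt n x (s + j)) :
    leadOnes n y s l = leadOnes n x s l := by
  unfold leadOnes
  congr 1
  apply Finset.filter_congr
  intro a ha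
  simp only [Finset.mem_range] at ha
  constructor <;> intro hall j hj <;>
    [rw [← h j (lt_of_le_of_lt hj ha)]; rw [h j (lt_of_le_of_lt hj ha)]] <;>
    exact hall j hj

lemma trail_congr (n : ℕ) (x y : Fin n → Bool) (s l : ℕ)
    (h : ∀ j < l, bitAt n y (s + j) = bitAt n x (s + j)) :
    trailZeros n y s l = trailZeros n x s l := by
  unfold trailZeros
  congr 1
  apply Finset.filter_congr
  intro a ha
  constructor <;> intro hall j hj hjl <;>
    [rw [← h j hjl]; rw [h j hjl]] <;> exact hall j hj hjl

/-- a bit string is Pareto-optimal for `m`-objective LOTZ iff each of its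
`m/2` blocks of length `n' = 2n/m` has the form `1^i 0^(n'-i)`. -/
theorem stmt0 (m n : ℕ) (hm : Even m) (hm4 : 4 ≤ m) (hdvd : m / 2 ∣ n)
    (x : Fin n → Bool) :
    ParetoOpt m n x ↔
      ∀ k < m / 2, ∃ i ≤ 2 * n / m, ∀ j < 2 * n / m,
        (bitAt n x (k * (2 * n / m) + j) = true ↔ j < i) := by
  obtain ⟨m2, hm2⟩ := hm
  have hmm : m = 2 * m2 := by omega
  have hm2div : m / 2 = m2 := by omega
  obtain ⟨c, hc⟩ := hdvd
  have hn : n = m2 * c := by rw [hc, hm2div]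
  have hl : 2 * n / m = c := by
    rw [hn, hmm]
    rw [show 2 * (m2 * c) = 2 * m2 * c by ring]
    exact Nat.mul_div_cancel_left c (by omega)
  set l := 2 * n / m with hldef
  have hnl : m / 2 * l = n := by rw [hl, hm2div, hn]
  constructor
  · -- Pareto → form
    intro hpar k hk
    by_contra hform
    push_neg at hform
    set s := k * l with hs
    set L := leadOnes n x s l with hLdef
    set T := trailZeros n x s l with hTdef
    have hLl : L ≤ l := lead_le n x s l
    have hsum : L + T ≤ l := sum_le n x s l
    have hne : L + T ≠ l := by
      intro he
      obtain ⟨j, hjl, hj2⟩ := hform L hLl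
      have hiff := form_of_sum n x s l he j hjl
      rcases hj2 with ⟨hb, hLe⟩ | ⟨hb, hjL⟩
      · exact absurd (hiff.mp hb) (by omega)
      · exact hb (hiff.mpr hjL)
    set y : Fin n → Bool :=
      fun j => if s ≤ j.val ∧ j.val < s + l then decide (j.val - s < L) else x j with hy
    have hyform : ∀ j < l, (bitAt n y (s + j) = true ↔ j < L) := by
      intro j hj
      have hlt : s + j < n := by
        have h1 : s + j < (k + 1) * l := by
          rw [hs]; ring_nf; omega
        have h2 : (k + 1) * l ≤ m / 2 * l := Nat.mul_le_mul_right l (by omega)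
        omega
      rw [bitAt, dif_pos hlt, hy]
      simp only
      rw [if_pos ⟨by omega, by omega⟩]
      simp only [decide_eq_true_eq]
      omega
    have hycong : ∀ k' : ℕ, k' ≠ k → ∀ j < l,
        bitAt n y (k' * l + j) = bitAt n x (k' * l + j) := by
      intro k' hk' j hj
      have hout : ¬ (s ≤ k' * l + j ∧ k' * l + j < s + l) := by
        rcases lt_or_gt_of_ne hk' with h | h
        · have : (k' + 1) * l ≤ k * l := Nat.mul_le_mul_right l (by omega)
          rw [hs]; push_neg; intro hge; exfalso
          have : k' * l + j < (k' + 1) * l := by ring_nf; omega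
          omega
        · have : (k + 1) * l ≤ k' * l := Nat.mul_le_mul_right l (by omega)
          rw [hs]; push_neg; intro hge
          have : (k + 1) * l = k * l + l := by ring
          omega
      rw [bitAt, bitAt]
      split
      · rw [hy]; simp only; rw [if_neg hout]
      · rfl
    have hyL : leadOnes n y s l = L ∧ trailZeros n y s l = l - L :=
      of_form n y s l L hLl hyform
    refine hpar y ⟨?_, ?_⟩
    · intro i
      rw [mLOTZ, mLOTZ, ← hldef]
      set k' := i.val / 2 with hk'
      by_cases hkk : k' = k
      · rw [hkk, ← hs]
        split
        · rw [hyL.1]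
        · rw [hyL.2]; omega
      · have hcong := hycong k' hkk
        split
        · rw [lead_congr n x y (k' * l) l hcong]
        · rw [trail_congr n x y (k' * l) l hcong]
    · refine ⟨⟨2 * k + 1, by omega⟩, ?_⟩
      rw [mLOTZ, mLOTZ, ← hldef]
      have h1 : (2 * k + 1) % 2 = 1 := by omega
      have h2 : (2 * k + 1) / 2 = k := by omega
      simp only [h1, h2, ← hs]
      have h12 : ¬(1 = 0) := by omega
      rw [if_neg h12, if_neg h12, hyL.2]
      omega
  · -- form → Pareto
    rintro hform y ⟨hle, i₀, hlt⟩
    set k := i₀.val / 2 with hk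
    have hk2 : k < m / 2 := Nat.div_lt_div_of_lt_of_dvd (by omega) i₀.isLt
    obtain ⟨i, hi, hf⟩ := hform k hk2
    have hx := of_form n x (k * l) l i hi hf
    have hsum := sum_le n y (k * l) l
    have h2k : 2 * k < m := by omega
    have h2k1 : 2 * k + 1 < m := by omega
    have he1 := hle ⟨2 * k, h2k⟩
    have he2 := hle ⟨2 * k + 1, h2k1⟩
    rw [mLOTZ, mLOTZ, ← hldef] at he1 he2
    simp only [show (2 * k) % 2 = 0 by omega, show (2 * k) / 2 = k by omega,
      show (2 * k + 1) % 2 = 1 by omega, show (2 * k + 1) / 2 = k by omega,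
      if_true] at he1 he2
    have h12 : ¬(1 = 0) := by omega
    rw [if_neg h12, if_neg h12] at he2
    rw [hx.1] at he1
    rw [hx.2] at he2
    rw [mLOTZ, mLOTZ, ← hldef] at hlt
    rcases Nat.even_or_odd i₀.val with hpar | hpar
    · have hmod : i₀.val % 2 = 0 := Nat.even_iff.mp hpar
      rw [if_pos hmod, if_pos hmod, ← hk, hx.1] at hlt
      omega
    · have hmod : i₀.val % 2 = 1 := Nat.odd_iff.mp hpar
      rw [if_neg (by omega), if_neg (by omega), ← hk, hx.2] at hlt
      omega
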